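/- Let G be a finite group and p a prime such that for every minimal non-abelian subgroup H of G, the commutator subgroup H' is not a p-group. If P is a Sylow p-subgroup of G, then P is abelian and N_G(P) = C_G(P), and hence G has a normal p-complement. -/

import Mathlib

/-- A subgroup is minimal non-abelian if it is non-abelian and all its proper
subgroups are abelian. -/
def IsMinNonab (G : Type*) [Group G] (H : Subgroup G) : Prop :=
  ¬ IsMulCommutative H ∧ ∀ K : Subgroup G, K < H → IsMulCommutative K

open Subgroup
open scoped commutatorElement

lemma exists_minNonab {G : Type*} [Group G] [Finite G] (S : Subgroup G)
    (hS : ¬ IsMulCommutative S) : ∃ H : Subgroup G, IsMinNonab G H ∧ H ≤ S := by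
  have : WellFoundedLT (Subgroup G) := Finite.to_wellFoundedLT
  obtain ⟨H, hH, hmin⟩ := this.wf.has_min {K : Subgroup G | K ≤ S ∧ ¬ IsMulCommutative K}
    ⟨S, le_rfl, hS⟩
  exact ⟨H, ⟨hH.2, fun K hK => by
    by_contra hKc
    exact hmin K ⟨hK.le.trans hH.1, hKc⟩ hK⟩, hH.1⟩

/-- If no minimal non-abelian subgroup of `G` has `p`-group commutator subgroup, then a
Sylow `p`-subgroup `P` is abelian, `N_G(P) = C_G(P)`, and `G` has a normal
`p`-complement. -/
theorem stmt1 {G : Type*} [Group G] [Finite G] (p : ℕ) (hp : p.Prime)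
    (h : ∀ H : Subgroup G, IsMinNonab G H → ¬ IsPGroup p ↥⁅H, H⁆)
    (P : Sylow p G) :
    IsMulCommutative (P : Subgroup G) ∧
    Subgroup.normalizer ((P : Subgroup G) : Set G) = Subgroup.centralizer ((P : Subgroup G) : Set G) ∧
    ∃ K : Subgroup G, K.Normal ∧ ¬ p ∣ Nat.card K ∧
      K ⊓ (P : Subgroup G) = ⊥ ∧ K ⊔ (P : Subgroup G) = ⊤ := by
  haveI : Fact p.Prime := ⟨hp⟩
  have key : ∀ S : Subgroup G, ⁅S, S⁆ ≤ (P : Subgroup G) → IsMulCommutative S := by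
    intro S hS
    by_contra hnc
    obtain ⟨H, hH, hHS⟩ := exists_minNonab S hnc
    exact h H hH (P.isPGroup'.to_le ((Subgroup.commutator_mono hHS hHS).trans hS))
  have hPab : IsMulCommutative (P : Subgroup G) := by
    apply key
    rw [Subgroup.commutator_le]
    intro g1 h1 g2 h2
    exact mul_mem (mul_mem (mul_mem h1 h2) (inv_mem h1)) (inv_mem h2)
  have hNC : normalizer ((P : Subgroup G) : Set G) ≤ centralizer ((P : Subgroup G) : Set G) := by
    intro x hx
    rw [mem_centralizer_iff]
    intro g hg
    set S := (P : Subgroup G) ⊔ zpowers x with hSdef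
    have hSN : S ≤ normalizer ((P : Subgroup G) : Set G) := sup_le le_normalizer (zpowers_le.mpr hx)
    have hcomm : ⁅S, S⁆ ≤ (P : Subgroup G) := by
      rw [Subgroup.commutator_le]
      intro a ha b hb
      set N := normalizer ((P : Subgroup G) : Set G)
      set Q := (P : Subgroup G).subgroupOf N with hQdef
      haveI : Q.Normal := Subgroup.normal_in_normalizer
      set π := QuotientGroup.mk' Q with hπdef
      have hSsub : S.subgroupOf N =
          (P : Subgroup G).subgroupOf N ⊔ (zpowers x).subgroupOf N :=
        Subgroup.subgroupOf_sup le_normalizer (zpowers_le.mpr hx)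
      have hmap : (S.subgroupOf N).map π ≤ zpowers (π ⟨x, hx⟩) := by
        rw [hSsub, Subgroup.map_sup]
        apply sup_le
        · intro y hy
          rw [Subgroup.mem_map] at hy
          obtain ⟨q, hq, rfl⟩ := hy
          have : π q = 1 := (QuotientGroup.eq_one_iff q).mpr hq
          rw [this]; exact one_mem _
        · intro y hy
          rw [Subgroup.mem_map] at hy
          obtain ⟨q, hq, rfl⟩ := hy
          rw [Subgroup.mem_subgroupOf, Subgroup.mem_zpowers_iff] at hq
          obtain ⟨k, hk⟩ := hq
          refine ⟨k, ?_⟩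
          show π ⟨x, hx⟩ ^ k = π q
          rw [← map_zpow]
          congr 1
          exact Subtype.ext hk
      have hmem : ∀ c (hc : c ∈ S), π ⟨c, hSN hc⟩ ∈ zpowers (π ⟨x, hx⟩) := by
        intro c hc
        exact hmap (Subgroup.mem_map.mpr ⟨⟨c, hSN hc⟩, by rwa [Subgroup.mem_subgroupOf], rfl⟩)
      obtain ⟨m, hm⟩ := hmem a ha
      obtain ⟨k, hk⟩ := hmem b hb
      have hcommute : Commute (π ⟨a, hSN ha⟩) (π ⟨b, hSN hb⟩) := by
        rw [← hm, ← hk]; exact (Commute.refl _).zpow_zpow m k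
      have hone : π ⟨⁅a, b⁆,
          hSN (mul_mem (mul_mem (mul_mem ha hb) (inv_mem ha)) (inv_mem hb))⟩ = 1 := by
        have heq : (⟨⁅a, b⁆, hSN (mul_mem (mul_mem (mul_mem ha hb) (inv_mem ha)) (inv_mem hb))⟩
            : N) = ⁅(⟨a, hSN ha⟩ : N), (⟨b, hSN hb⟩ : N)⁆ := by
          apply Subtype.ext; rfl
        rw [heq, map_commutatorElement, commutatorElement_eq_one_iff_commute]
        exact hcommute
      have hone' := (QuotientGroup.eq_one_iff _).mp hone
      rw [hQdef, Subgroup.mem_subgroupOf] at hone'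
      exact hone'
    haveI hScomm : IsMulCommutative S := key S hcomm
    exact mul_comm_of_mem_isMulCommutative S
      ((le_sup_left : (P : Subgroup G) ≤ S) hg)
      ((le_sup_right : zpowers x ≤ S) (mem_zpowers x))
  have hCN : centralizer ((P : Subgroup G) : Set G) ≤ normalizer ((P : Subgroup G) : Set G) := by
    intro x hx
    rw [mem_normalizer_iff]
    intro g
    constructor
    · intro hg
      have hc := (mem_centralizer_iff.mp hx) g hg
      have : x * g * x⁻¹ = g := by rw [← hc]; group
      rwa [this]
    · intro hg
      have hc := (mem_centralizer_iff.mp hx) _ hg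
      have hgg : g = x * g * x⁻¹ := by
        have h1 : x * g = x * (x * g * x⁻¹) := by rw [← hc]; group
        exact mul_left_cancel h1
      rwa [← hgg] at hg
  refine ⟨hPab, le_antisymm hNC hCN, (MonoidHom.transferSylow P hNC).ker, inferInstance,
    MonoidHom.not_dvd_card_ker_transferSylow P hNC, ?_, ?_⟩
  · exact disjoint_iff.mp (MonoidHom.ker_transferSylow_isComplement' P hNC).disjoint
  · exact (MonoidHom.ker_transferSylow_isComplement' P hNC).sup_eq_top
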